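/- Let Φ : ℝ^N → Set(ℝ^N) be a monotone set-valued map and let S be a real N×N symmetric positive definite matrix. Suppose u, v, a, b ∈ ℝ^N and p ∈ Φ(u), q ∈ Φ(v) satisfy S u + p = a and S v + q = b. Then ‖u − v‖_S ≤ ‖a − b‖_{S⁻¹}, i.e., the variable-metric resolvent (S + Φ)⁻¹ is nonexpansive from the ‖·‖_{S⁻¹}-norm to the ‖·‖_S-norm. -/

import Mathlib

open Matrix

/-- The variable-metric resolvent `(S + Φ)⁻¹` of a monotone operator `Φ`
is nonexpansive from the `‖·‖_{S⁻¹}`-norm to the `‖·‖_S`-norm: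
if `S u + p = a` and `S v + q = b` with `p ∈ Φ(u)`, `q ∈ Φ(v)`, then
`‖u − v‖_S ≤ ‖a − b‖_{S⁻¹}`. -/
theorem stmt13 {N : ℕ} (Φ : (Fin N → ℝ) → Set (Fin N → ℝ))
    (hmono : ∀ u v p q, p ∈ Φ u → q ∈ Φ v → 0 ≤ (u - v) ⬝ᵥ (p - q))
    (S : Matrix (Fin N) (Fin N) ℝ) (hS : S.PosDef)
    (u v a b p q : Fin N → ℝ)
    (hp : p ∈ Φ u) (hq : q ∈ Φ v)
    (ha : S.mulVec u + p = a) (hb : S.mulVec v + q = b) :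
    Real.sqrt ((u - v) ⬝ᵥ S.mulVec (u - v)) ≤
      Real.sqrt ((a - b) ⬝ᵥ S⁻¹.mulVec (a - b)) := by
  set w := u - v with hw
  set d := a - b with hd
  have hdet : IsUnit S.det := isUnit_iff_ne_zero.mpr hS.det_pos.ne'
  have hSinv : S * S⁻¹ = 1 := Matrix.mul_nonsing_inv S hdet
  have hSinvS : S⁻¹ * S = 1 := Matrix.nonsing_inv_mul S hdet
  have hsymm : Sᵀ = S := hS.1
  have hsd : S.mulVec (S⁻¹.mulVec d) = d := by
    rw [Matrix.mulVec_mulVec, hSinv, Matrix.one_mulVec]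
  -- d = S w + (p - q)
  have hdeq : d = S.mulVec w + (p - q) := by
    rw [hd, ← ha, ← hb, hw, Matrix.mulVec_sub]
    abel
  -- monotonicity: w ⬝ S w ≤ w ⬝ d
  have h1 : w ⬝ᵥ S.mulVec w ≤ w ⬝ᵥ d := by
    have := hmono u v p q hp hq
    rw [hdeq, dotProduct_add]
    linarith
  -- (S⁻¹ d) ⬝ S w = d ⬝ w
  have hinvsymm : S⁻¹ᵀ = S⁻¹ := by rw [Matrix.transpose_nonsing_inv, hsymm]
  have h2 : (S⁻¹.mulVec d) ⬝ᵥ S.mulVec w = d ⬝ᵥ w := by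
    rw [Matrix.dotProduct_mulVec, Matrix.vecMul_mulVec, hinvsymm, hSinvS,
      Matrix.vecMul_one]
  -- positivity of the quadratic form at w - S⁻¹ d
  have h3 : 0 ≤ (w - S⁻¹.mulVec d) ⬝ᵥ S.mulVec (w - S⁻¹.mulVec d) :=
    by simpa using hS.posSemidef.dotProduct_mulVec_nonneg (w - S⁻¹.mulVec d)
  clear_value w d
  have h4 : (w - S⁻¹.mulVec d) ⬝ᵥ S.mulVec (w - S⁻¹.mulVec d)
      = w ⬝ᵥ S.mulVec w - w ⬝ᵥ d - d ⬝ᵥ w + d ⬝ᵥ S⁻¹.mulVec d := by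
    rw [Matrix.mulVec_sub, hsd, sub_dotProduct, dotProduct_sub,
      dotProduct_sub, h2]
    have : (S⁻¹.mulVec d) ⬝ᵥ d = d ⬝ᵥ S⁻¹.mulVec d := dotProduct_comm _ _
    rw [this]
    ring
  have hwd : d ⬝ᵥ w = w ⬝ᵥ d := dotProduct_comm _ _
  have key : w ⬝ᵥ S.mulVec w ≤ d ⬝ᵥ S⁻¹.mulVec d := by
    rw [h4, hwd] at h3
    linarith
  exact Real.sqrt_le_sqrt key
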